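/- Let $d \ge 1$ and $r_1,\ldots,r_d \in [0,1]$. Then $\sum_{k=0}^{\lfloor d/2\rfloor} \sum_{\Lambda \subseteq [d], |\Lambda|=k} \prod_{j\in [d]\setminus\Lambda} (1-r_j) \le (8 \sum_{j=1}^d (1-r_j) / d)^{d/2}$. -/
import Mathlib


open Finset

lemma amgm_unweighted {ι : Type*} (T : Finset ι) (z : ι → ℝ) (hz : ∀ i ∈ T, 0 ≤ z i)
    (hT : T.Nonempty) : ∏ i ∈ T, z i ≤ ((∑ i ∈ T, z i) / T.card) ^ T.card := by
  have hm : (0:ℝ) < T.card := by exact_mod_cast Finset.card_pos.mpr hT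
  have h := Real.geom_mean_le_arith_mean_weighted T (fun _ => (T.card : ℝ)⁻¹) z
    (fun i _ => by positivity) (by simp; field_simp) hz
  calc ∏ i ∈ T, z i = (∏ i ∈ T, z i ^ ((T.card:ℝ)⁻¹)) ^ (T.card:ℕ) := by
        rw [← Finset.prod_pow]
        refine Finset.prod_congr rfl fun i hi => ?_
        rw [← Real.rpow_natCast (z i ^ ((T.card:ℝ)⁻¹)), ← Real.rpow_mul (hz i hi),
          inv_mul_cancel₀ hm.ne', Real.rpow_one]
    _ ≤ ((∑ i ∈ T, z i) / T.card) ^ T.card := by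
        apply pow_le_pow_left₀ (Finset.prod_nonneg fun i hi => Real.rpow_nonneg (hz i hi) _)
        calc (∏ i ∈ T, z i ^ ((T.card:ℝ)⁻¹)) ≤ ∑ i ∈ T, (T.card:ℝ)⁻¹ * z i := h
          _ = (∑ i ∈ T, z i) / T.card := by rw [← Finset.mul_sum]; ring

theorem superexp_type2_combinatorial_bound (d : ℕ) (hd : 1 ≤ d) (r : Fin d → ℝ)
    (hr : ∀ j, r j ∈ Set.Icc (0:ℝ) 1) :
    ∑ k ∈ Finset.range (d/2+1),
      ∑ Λ ∈ Finset.powersetCard k (Finset.univ : Finset (Fin d)),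
        ∏ j ∈ Finset.univ \ Λ, (1 - r j)
      ≤ (8 * (∑ j, (1 - r j)) / d) ^ ((d:ℝ)/2) := by
  have hs0 : ∀ j, 0 ≤ 1 - r j := fun j => by have := (hr j).2; linarith
  have hs1 : ∀ j, 1 - r j ≤ 1 := fun j => by have := (hr j).1; linarith
  set S : ℝ := ∑ j, (1 - r j) with hSdef
  have hS0 : 0 ≤ S := Finset.sum_nonneg fun j _ => hs0 j
  have hd0 : (0:ℝ) < d := by exact_mod_cast hd
  -- facts about cardinalities
  have hcard : ∀ k, (Finset.powersetCard k (Finset.univ : Finset (Fin d))).card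
      = d.choose k := by
    intro k; rw [Finset.card_powersetCard, Finset.card_univ, Fintype.card_fin]
  have hcomp : ∀ k, ∀ Λ ∈ Finset.powersetCard k (Finset.univ : Finset (Fin d)),
      ((Finset.univ : Finset (Fin d)) \ Λ).card = d - k := by
    intro k Λ hΛ
    rw [Finset.mem_powersetCard] at hΛ
    rw [Finset.card_sdiff_of_subset hΛ.1, Finset.card_univ, Fintype.card_fin, hΛ.2]
  have hchoose : (∑ k ∈ Finset.range (d/2+1), (d.choose k : ℝ)) ≤ 2 ^ d := by
    have h1 : (∑ k ∈ Finset.range (d/2+1), d.choose k) ≤ ∑ k ∈ Finset.range (d+1), d.choose k := by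
      apply Finset.sum_le_sum_of_subset
      apply Finset.range_subset_range.mpr; omega
    rw [Nat.sum_range_choose] at h1
    exact_mod_cast h1
  have h4 : ((2:ℝ) ^ d) = (4:ℝ) ^ ((d:ℝ)/2) := by
    rw [show (4:ℝ) = (2:ℝ) ^ (2:ℝ) by norm_num [← Real.rpow_natCast 2 2],
      ← Real.rpow_natCast 2 d, ← Real.rpow_mul (by norm_num : (0:ℝ) ≤ 2)]
    congr 1; ring
  by_cases hbig : (d:ℝ) ≤ 2 * S
  · -- each product is at most 1
    have hterm : ∀ k ∈ Finset.range (d/2+1),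
        (∑ Λ ∈ Finset.powersetCard k (Finset.univ : Finset (Fin d)),
          ∏ j ∈ Finset.univ \ Λ, (1 - r j)) ≤ (d.choose k : ℝ) := by
      intro k _
      calc (∑ Λ ∈ Finset.powersetCard k (Finset.univ : Finset (Fin d)),
            ∏ j ∈ Finset.univ \ Λ, (1 - r j))
          ≤ (Finset.powersetCard k (Finset.univ : Finset (Fin d))).card • (1:ℝ) := by
            apply Finset.sum_le_card_nsmul
            intro Λ _
            exact Finset.prod_le_one (fun j _ => hs0 j) (fun j _ => hs1 j)
        _ = (d.choose k : ℝ) := by rw [hcard k]; simp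
    calc _ ≤ ∑ k ∈ Finset.range (d/2+1), (d.choose k : ℝ) := Finset.sum_le_sum hterm
      _ ≤ (2:ℝ) ^ d := hchoose
      _ = (4:ℝ) ^ ((d:ℝ)/2) := h4
      _ ≤ (8 * S / d) ^ ((d:ℝ)/2) := by
          apply Real.rpow_le_rpow (by norm_num) _ (by positivity)
          rw [le_div_iff₀ hd0]; linarith
  · push_neg at hbig
    set t : ℝ := 2 * S / d with htdef
    have ht0 : 0 ≤ t := by positivity
    have ht1 : t < 1 := by rw [htdef, div_lt_one hd0]; linarith
    -- per-term bound
    have hterm : ∀ k ∈ Finset.range (d/2+1),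
        ∀ Λ ∈ Finset.powersetCard k (Finset.univ : Finset (Fin d)),
        (∏ j ∈ Finset.univ \ Λ, (1 - r j)) ≤ t ^ ((d:ℝ)/2) := by
      intro k hk Λ hΛ
      rw [Finset.mem_range] at hk
      have hkd : 2 * k ≤ d := by omega
      have hm : ((Finset.univ : Finset (Fin d)) \ Λ).card = d - k := hcomp k Λ hΛ
      have hmpos : 0 < d - k := by omega
      have hmne : ((Finset.univ : Finset (Fin d)) \ Λ).Nonempty := by
        rw [← Finset.card_pos, hm]; exact hmpos
      have hsub : (∑ j ∈ Finset.univ \ Λ, (1 - r j)) ≤ S := by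
        apply Finset.sum_le_sum_of_subset_of_nonneg (Finset.sdiff_subset)
        intro j _ _; exact hs0 j
      have hmR : (0:ℝ) < ((d - k : ℕ) : ℝ) := by exact_mod_cast hmpos
      have hdm : (d:ℝ) ≤ 2 * ((d-k : ℕ) : ℝ) := by
        have : d ≤ 2 * (d - k) := by omega
        exact_mod_cast this
      calc (∏ j ∈ Finset.univ \ Λ, (1 - r j))
          ≤ ((∑ j ∈ Finset.univ \ Λ, (1 - r j)) / ((Finset.univ \ Λ).card : ℝ))
              ^ ((Finset.univ \ Λ).card) :=
            amgm_unweighted _ _ (fun j _ => hs0 j) hmne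
        _ ≤ t ^ (d - k) := by
            rw [hm]
            apply pow_le_pow_left₀ (div_nonneg (Finset.sum_nonneg fun j _ => hs0 j) (le_of_lt hmR))
            rw [div_le_iff₀ hmR, htdef, div_mul_eq_mul_div, le_div_iff₀ hd0]
            nlinarith [hsub, hS0]
        _ = t ^ (((d - k : ℕ) : ℝ)) := (Real.rpow_natCast t (d-k)).symm
        _ ≤ t ^ ((d:ℝ)/2) := by
            rcases eq_or_lt_of_le ht0 with h0 | h0
            · rw [← h0, Real.zero_rpow (ne_of_gt hmR),
                Real.zero_rpow (ne_of_gt (by linarith : (0:ℝ) < (d:ℝ)/2))]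
            · apply Real.rpow_le_rpow_of_exponent_ge h0 ht1.le
              linarith
    calc _ ≤ ∑ k ∈ Finset.range (d/2+1), (d.choose k : ℝ) * t ^ ((d:ℝ)/2) := by
          apply Finset.sum_le_sum
          intro k hk
          calc _ ≤ (Finset.powersetCard k (Finset.univ : Finset (Fin d))).card
                • (t ^ ((d:ℝ)/2)) := Finset.sum_le_card_nsmul _ _ _ (hterm k hk)
            _ = (d.choose k : ℝ) * t ^ ((d:ℝ)/2) := by rw [hcard k]; simp
      _ = (∑ k ∈ Finset.range (d/2+1), (d.choose k : ℝ)) * t ^ ((d:ℝ)/2) := by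
          rw [Finset.sum_mul]
      _ ≤ (2:ℝ) ^ d * t ^ ((d:ℝ)/2) := by
          apply mul_le_mul_of_nonneg_right hchoose (Real.rpow_nonneg ht0 _)
      _ = (4:ℝ) ^ ((d:ℝ)/2) * t ^ ((d:ℝ)/2) := by rw [h4]
      _ = (4 * t) ^ ((d:ℝ)/2) := (Real.mul_rpow (by norm_num) ht0).symm
      _ = (8 * S / d) ^ ((d:ℝ)/2) := by rw [htdef]; ring_nf
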